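/- Let f : ℝ → ℝ be 2π-periodic and Lebesgue integrable on [0, 2π], and suppose that its Poisson integral vanishes identically on the open unit disk, i.e. for every ρ ∈ [0, 1) and every θ ∈ ℝ one has ∫₀^{2π} f(φ) · (1 − ρ²) / (1 − 2ρ·cos(θ − φ) + ρ²) dφ = 0. Then f(θ) = 0 for almost every θ ∈ [0, 2π]. Consequently, the solution of the Dirichlet problem on the unit disk with integrable boundary datum f given by the Poisson integral is unique: two integrable boundary data whose Poisson integrals coincide on the open unit disk are equal almost everywhere. -/

import Mathlib

open MeasureTheory Filter Set
open Topology

noncomputable def PK (ρ t : ℝ) : ℝ := (1 - ρ ^ 2) / (1 - 2 * ρ * Real.cos t + ρ ^ 2)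

lemma PK_denom_pos {ρ : ℝ} (h0 : 0 ≤ ρ) (h1 : ρ < 1) (t : ℝ) :
    0 < 1 - 2 * ρ * Real.cos t + ρ ^ 2 := by
  nlinarith [Real.cos_le_one t, Real.neg_one_le_cos t, sq_nonneg (1 - ρ), sq_nonneg (1 + ρ)]

lemma PK_nonneg {ρ : ℝ} (h0 : 0 ≤ ρ) (h1 : ρ < 1) (t : ℝ) : 0 ≤ PK ρ t :=
  div_nonneg (by nlinarith) (PK_denom_pos h0 h1 t).le

lemma PK_cont {ρ : ℝ} (h0 : 0 ≤ ρ) (h1 : ρ < 1) : Continuous (PK ρ) :=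
  continuous_const.div (by continuity) fun t => (PK_denom_pos h0 h1 t).ne'

lemma PK_periodic (ρ : ℝ) : Function.Periodic (PK ρ) (2 * Real.pi) := fun t => by
  simp [PK, Real.cos_add_two_pi]

lemma PK_le {ρ : ℝ} (h0 : 0 ≤ ρ) (h1 : ρ < 1) (t : ℝ) :
    PK ρ t ≤ (1 - ρ ^ 2) / (1 - ρ) ^ 2 := by
  apply div_le_div_of_nonneg_left (by nlinarith) (by nlinarith)
  nlinarith [Real.cos_le_one t]

lemma PK_integral {ρ : ℝ} (h0 : 0 ≤ ρ) (h1 : ρ < 1) :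
    ∫ t in (0:ℝ)..(2 * Real.pi), PK ρ t = 2 * Real.pi := by
  have key : ∀ t : ℝ, HasDerivAt
      (fun t => t + 2 * Real.arctan (ρ * Real.sin t / (1 - ρ * Real.cos t))) (PK ρ t) t := by
    intro t
    have hden : (0:ℝ) < 1 - ρ * Real.cos t := by nlinarith [Real.cos_le_one t]
    have hu : HasDerivAt (fun t => ρ * Real.sin t / (1 - ρ * Real.cos t))
        ((ρ * Real.cos t * (1 - ρ * Real.cos t) - ρ * Real.sin t * (ρ * Real.sin t)) /
          (1 - ρ * Real.cos t) ^ 2) t :=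
      (((Real.hasDerivAt_sin t).const_mul ρ).div
        ((((Real.hasDerivAt_cos t).const_mul ρ).const_sub 1)) hden.ne').congr_deriv (by ring)
    have h2 := (hasDerivAt_id t).add ((hu.arctan).const_mul 2)
    refine h2.congr_deriv ?_; symm
    have hD := (PK_denom_pos h0 h1 t).ne'
    have hpyth := Real.sin_sq_add_cos_sq t
    rw [PK]
    have h1p : (0:ℝ) < 1 + (ρ * Real.sin t / (1 - ρ * Real.cos t)) ^ 2 := by positivity
    have hc := hden.ne'
    have e : 1 + (ρ * Real.sin t / (1 - ρ * Real.cos t)) ^ 2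
        = (1 - 2 * ρ * Real.cos t + ρ ^ 2) / (1 - ρ * Real.cos t) ^ 2 := by
      rw [eq_div_iff (pow_ne_zero 2 hc), add_mul, div_pow, div_mul_cancel₀ _ (pow_ne_zero 2 hc)]
      linear_combination ρ ^ 2 * hpyth
    rw [e, one_div_div, div_mul_div_comm, mul_comm ((1 - ρ * Real.cos t) ^ 2),
      mul_div_mul_right _ _ (pow_ne_zero 2 hc), mul_div_assoc', div_eq_iff hD, add_mul,
      div_mul_cancel₀ _ hD]
    linear_combination (2 * ρ ^ 2) * hpyth
  rw [intervalIntegral.integral_eq_sub_of_hasDerivAt (fun t _ => key t)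
    ((PK_cont h0 h1).intervalIntegrable _ _)]
  simp [Real.sin_two_pi, Real.cos_two_pi]

lemma PK_integral_shift {ρ : ℝ} (h0 : 0 ≤ ρ) (h1 : ρ < 1) (φ : ℝ) :
    ∫ t in (0:ℝ)..(2 * Real.pi), PK ρ (t - φ) = 2 * Real.pi := by
  rw [intervalIntegral.integral_comp_sub_right (fun t => PK ρ t) φ]
  have := (PK_periodic ρ).intervalIntegral_add_eq (0 - φ) 0
  rw [zero_add] at this
  rw [show (2 * Real.pi - φ) = 0 - φ + 2 * Real.pi by ring, this, PK_integral h0 h1]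

lemma PK_setIntegral_shift {ρ : ℝ} (h0 : 0 ≤ ρ) (h1 : ρ < 1) (φ : ℝ) :
    ∫ t in Icc (0:ℝ) (2 * Real.pi), PK ρ (t - φ) = 2 * Real.pi := by
  rw [MeasureTheory.integral_Icc_eq_integral_Ioc,
    ← intervalIntegral.integral_of_le (by positivity), PK_integral_shift h0 h1]


lemma cos_le_cos_far {t δ : ℝ} (hδ : 0 < δ) (hδπ : δ ≤ Real.pi)
    (ht1 : δ ≤ |t|) (ht2 : |t| ≤ 2 * Real.pi - δ) : Real.cos t ≤ Real.cos δ := by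
  rw [← Real.cos_abs t]
  rcases le_or_gt |t| Real.pi with h | h
  · exact Real.cos_le_cos_of_nonneg_of_le_pi hδ.le h ht1
  · have : Real.cos |t| = Real.cos (2 * Real.pi - |t|) := by
      rw [Real.cos_sub, Real.cos_two_pi, Real.sin_two_pi]; ring
    rw [this]
    exact Real.cos_le_cos_of_nonneg_of_le_pi hδ.le (by linarith) (by linarith)

lemma one_sub_cos_pos {δ : ℝ} (hδ : 0 < δ) (hδπ : δ ≤ Real.pi) : 0 < 1 - Real.cos δ := by
  have : Real.cos δ < Real.cos 0 := Real.cos_lt_cos_of_nonneg_of_le_pi le_rfl hδπ hδ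
  rw [Real.cos_zero] at this; linarith

noncomputable def rseq (n : ℕ) : ℝ := 1 - 1 / (n + 2)

lemma rseq_half (n : ℕ) : 1/2 ≤ rseq n := by
  have : 1 / ((n:ℝ) + 2) ≤ 1/2 := by
    apply div_le_div_of_nonneg_left one_pos.le two_pos
    linarith [Nat.cast_nonneg (α := ℝ) n]
  simp only [rseq]; linarith

lemma rseq_lt_one (n : ℕ) : rseq n < 1 := by
  have : 0 < 1 / ((n:ℝ) + 2) := by positivity
  simp only [rseq]; linarith

lemma rseq_nonneg (n : ℕ) : 0 ≤ rseq n := le_trans (by norm_num) (rseq_half n)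

lemma rseq_tendsto : Tendsto rseq atTop (𝓝 1) := by
  have h : Tendsto (fun n : ℕ => 1 / ((n:ℝ) + 2)) atTop (𝓝 0) := by
    have h2 : Tendsto (fun n : ℕ => ((n:ℝ) + 2)) atTop atTop :=
      tendsto_atTop_add_const_right _ 2 tendsto_natCast_atTop_atTop
    exact (tendsto_inv_atTop_zero.comp h2).congr (fun n => by
      rw [Function.comp_apply, one_div])
  have := h.const_sub 1
  simp only [sub_zero] at this
  exact this.congr (fun n => by rw [rseq])

lemma sq_rseq_tendsto : Tendsto (fun n => 1 - rseq n ^ 2) atTop (𝓝 0) := by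
  have := (rseq_tendsto.mul rseq_tendsto).const_sub 1
  simpa [← sq] using this

lemma peak_conv (g : ℝ → ℝ) (hg : Continuous g) (φ₀ : ℝ)
    (hφ₀ : φ₀ ∈ Ioo (0:ℝ) (2 * Real.pi)) :
    Tendsto (fun n => ∫ θ in Icc (0:ℝ) (2 * Real.pi), PK (rseq n) (θ - φ₀) * g θ)
      atTop (𝓝 (2 * Real.pi * g φ₀)) := by
  have hπ : (0:ℝ) < 2 * Real.pi := by positivity
  set F : ℕ → ℝ → ℝ := fun n x => (1 / (2 * Real.pi)) * PK (rseq n) (x - φ₀) with hF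
  have main : Tendsto (fun n => ∫ x in Icc (0:ℝ) (2 * Real.pi), F n x • g x)
      atTop (𝓝 (g φ₀)) := by
    apply tendsto_setIntegral_peak_smul_of_integrableOn_of_tendsto
      measurableSet_Icc measurableSet_Icc subset_rfl self_mem_nhdsWithin
      (by simp [Real.volume_Icc]; exact ENNReal.mul_ne_top ENNReal.ofNat_ne_top ENNReal.ofReal_ne_top)
    · filter_upwards with n
      intro x _
      exact mul_nonneg (by positivity) (PK_nonneg (rseq_nonneg n) (rseq_lt_one n) _)
    · -- uniform convergence away from φ₀
      intro u hu hmem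
      obtain ⟨δ0, hδ0, hball⟩ := Metric.isOpen_iff.1 hu φ₀ hmem
      set δ : ℝ := min (min δ0 φ₀) (min (2 * Real.pi - φ₀) Real.pi) with hδdef
      have hδpos : 0 < δ := by
        apply lt_min (lt_min hδ0 hφ₀.1)
        exact lt_min (by linarith [hφ₀.2]) Real.pi_pos
      have hδπ : δ ≤ Real.pi := le_trans (min_le_right _ _) (min_le_right _ _)
      have hbd : ∀ n x, x ∈ Icc (0:ℝ) (2 * Real.pi) \ u →
          PK (rseq n) (x - φ₀) ≤ (1 - rseq n ^ 2) / (1 - Real.cos δ) := by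
        intro n x hx
        obtain ⟨⟨hx0, hx2⟩, hxu⟩ := hx
        have h1 : δ ≤ |x - φ₀| := by
          have : ¬ x ∈ Metric.ball φ₀ δ0 := fun h => hxu (hball h)
          rw [Metric.mem_ball, Real.dist_eq, not_lt] at this
          exact le_trans (le_trans (min_le_left _ _) (min_le_left _ _)) this
        have h2 : |x - φ₀| ≤ 2 * Real.pi - δ := by
          rw [abs_le]
          constructor
          · have : δ ≤ 2 * Real.pi - φ₀ := le_trans (min_le_right _ _) (min_le_left _ _)
            linarith
          · have : δ ≤ φ₀ := le_trans (min_le_left _ _) (min_le_right _ _)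
            linarith
        have hcos := cos_le_cos_far hδpos hδπ h1 h2
        have hc1 := one_sub_cos_pos hδpos hδπ
        have hr := rseq_half n
        have hr1 := rseq_lt_one n
        rw [PK]
        apply div_le_div_of_nonneg_left (by nlinarith) hc1
        nlinarith
      rw [Metric.tendstoUniformlyOn_iff]
      intro ε hε
      have : ∀ᶠ n in atTop, (1 / (2 * Real.pi)) * ((1 - rseq n ^ 2) / (1 - Real.cos δ)) < ε := by
        have hlim : Tendsto (fun n => (1 / (2 * Real.pi)) *
            ((1 - rseq n ^ 2) / (1 - Real.cos δ))) atTop (𝓝 0) := by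
          have := (sq_rseq_tendsto.div_const (1 - Real.cos δ)).const_mul (1 / (2 * Real.pi))
          simpa using this
        exact (hlim.eventually (gt_mem_nhds hε))
      filter_upwards [this] with n hn x hx
      rw [Pi.zero_apply, dist_comm, Real.dist_eq, sub_zero]
      have h0 := PK_nonneg (rseq_nonneg n) (rseq_lt_one n) (x - φ₀)
      rw [abs_of_nonneg (by positivity)]
      calc (1 / (2 * Real.pi)) * PK (rseq n) (x - φ₀)
          ≤ (1 / (2 * Real.pi)) * ((1 - rseq n ^ 2) / (1 - Real.cos δ)) := by
            apply mul_le_mul_of_nonneg_left (hbd n x hx) (by positivity)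
        _ < ε := hn
    · -- integral tends to one
      have : ∀ n, ∫ x in Icc (0:ℝ) (2 * Real.pi), F n x = 1 := by
        intro n
        rw [hF]
        simp only
        rw [MeasureTheory.integral_const_mul, PK_setIntegral_shift (rseq_nonneg n) (rseq_lt_one n)]
        field_simp
      simpa only [this] using tendsto_const_nhds
    · filter_upwards with n
      exact ((continuous_const.mul ((PK_cont (rseq_nonneg n) (rseq_lt_one n)).comp
        (continuous_id.sub continuous_const)))).aestronglyMeasurable
    · exact hg.integrableOn_Icc
    · exact (hg.tendsto φ₀).mono_left nhdsWithin_le_nhds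
  have := main.const_mul (2 * Real.pi)
  refine this.congr (fun n => ?_)
  rw [← MeasureTheory.integral_const_mul]
  congr 1
  ext x
  rw [smul_eq_mul, hF]
  simp only
  field_simp

lemma fubini_zero (f : ℝ → ℝ) (hf : IntegrableOn f (Icc (0:ℝ) (2 * Real.pi)))
    (hzero : ∀ ρ : ℝ, 0 ≤ ρ → ρ < 1 → ∀ θ : ℝ,
      (∫ φ in (0:ℝ)..(2 * Real.pi),
        f φ * (1 - ρ ^ 2) / (1 - 2 * ρ * Real.cos (θ - φ) + ρ ^ 2)) = 0)
    (g : ℝ → ℝ) (hg : Continuous g) {ρ : ℝ} (h0 : 0 ≤ ρ) (h1 : ρ < 1) :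
    ∫ φ in Icc (0:ℝ) (2 * Real.pi),
      f φ * ∫ θ in Icc (0:ℝ) (2 * Real.pi), PK ρ (θ - φ) * g θ = 0 := by
  have hπ : (0:ℝ) < 2 * Real.pi := by positivity
  set I := Icc (0:ℝ) (2 * Real.pi) with hI
  set μI := volume.restrict I with hμI
  -- bounds
  obtain ⟨M, hM⟩ : ∃ M, ∀ θ ∈ I, |g θ| ≤ M :=
    ⟨sSup (abs ∘ g '' I), fun θ hθ => le_csSup ((isCompact_Icc.image (hg.abs)).bddAbove)
      (mem_image_of_mem _ hθ)⟩
  have hMnn : 0 ≤ M := le_trans (abs_nonneg _) (hM 0 (by simp [hI, hπ.le]))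
  set C : ℝ := (1 - ρ ^ 2) / (1 - ρ) ^ 2 * M with hC
  -- integrability on the product
  have hcont : Continuous fun p : ℝ × ℝ => PK ρ (p.2 - p.1) * g p.2 :=
    ((PK_cont h0 h1).comp (continuous_snd.sub continuous_fst)).mul (hg.comp continuous_snd)
  have hprod : Integrable (fun p : ℝ × ℝ => f p.1 * (PK ρ (p.2 - p.1) * g p.2)) (μI.prod μI) := by
    apply Integrable.mono' (g := fun p : ℝ × ℝ => ‖f p.1‖ * C)
    · exact (hf.norm.mul_prod (integrable_const C))
    · exact (hf.aestronglyMeasurable.comp_fst).mul hcont.aestronglyMeasurable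
    · have hmem : ∀ᵐ p : ℝ × ℝ ∂(μI.prod μI), p ∈ I ×ˢ I := by
        rw [hμI, Measure.prod_restrict]
        exact ae_restrict_mem (measurableSet_Icc.prod measurableSet_Icc)
      filter_upwards [hmem] with p hp
      rw [norm_mul]
      apply mul_le_mul_of_nonneg_left _ (norm_nonneg _)
      rw [norm_mul, hC]
      have h2 := PK_nonneg h0 h1 (p.2 - p.1)
      apply mul_le_mul
      · rw [Real.norm_eq_abs, abs_of_nonneg h2]; exact PK_le h0 h1 _
      · exact hM p.2 hp.2
      · exact norm_nonneg _
      · exact div_nonneg (by nlinarith) (by positivity)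
  -- swap
  have hswap := MeasureTheory.integral_integral_swap
    (f := fun φ θ => f φ * (PK ρ (θ - φ) * g θ)) (μ := μI) (ν := μI) hprod
  have hL : ∀ φ, (∫ θ, f φ * (PK ρ (θ - φ) * g θ) ∂μI)
      = f φ * ∫ θ in I, PK ρ (θ - φ) * g θ := fun φ => MeasureTheory.integral_const_mul _ _
  have hR : ∀ θ, (∫ φ, f φ * (PK ρ (θ - φ) * g θ) ∂μI) = 0 := by
    intro θ
    have : (∫ φ, f φ * (PK ρ (θ - φ) * g θ) ∂μI)
        = (∫ φ in I, f φ * PK ρ (θ - φ)) * g θ := by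
      rw [← MeasureTheory.integral_mul_const]
      congr 1; ext φ; ring
    rw [this]
    have hz := hzero ρ h0 h1 θ
    rw [intervalIntegral.integral_of_le hπ.le] at hz
    have : (∫ φ in I, f φ * PK ρ (θ - φ)) = 0 := by
      rw [hI, MeasureTheory.integral_Icc_eq_integral_Ioc]
      have heq : ∀ φ, f φ * PK ρ (θ - φ)
          = f φ * (1 - ρ ^ 2) / (1 - 2 * ρ * Real.cos (θ - φ) + ρ ^ 2) := by
        intro φ; simp only [PK]; ring
      simp only [heq]
      exact hz
    rw [this, zero_mul]
  calc ∫ φ in I, f φ * ∫ θ in I, PK ρ (θ - φ) * g θ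
      = ∫ φ, (∫ θ, f φ * (PK ρ (θ - φ) * g θ) ∂μI) ∂μI := by
        congr 1; ext φ; rw [hL]
    _ = ∫ θ, (∫ φ, f φ * (PK ρ (θ - φ) * g θ) ∂μI) ∂μI := hswap
    _ = 0 := by simp only [hR, integral_zero]


lemma G_cont {ρ : ℝ} (h0 : 0 ≤ ρ) (h1 : ρ < 1) (g : ℝ → ℝ) (hg : Continuous g)
    {M : ℝ} (hM : ∀ θ ∈ Icc (0:ℝ) (2 * Real.pi), |g θ| ≤ M) :
    Continuous (fun φ => ∫ θ in Icc (0:ℝ) (2 * Real.pi), PK ρ (θ - φ) * g θ) := by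
  refine MeasureTheory.continuous_of_dominated (μ := volume.restrict (Icc (0:ℝ) (2 * Real.pi)))
    (F := fun φ θ => PK ρ (θ - φ) * g θ)
    (bound := fun θ => (1 - ρ ^ 2) / (1 - ρ) ^ 2 * M) ?_ ?_ ?_ ?_
  · intro φ
    exact (((PK_cont h0 h1).comp
      (continuous_id.sub continuous_const)).mul hg).aestronglyMeasurable
  · intro φ
    filter_upwards [ae_restrict_mem measurableSet_Icc] with θ hθ
    rw [norm_mul]
    have h2 := PK_nonneg h0 h1 (θ - φ)
    apply mul_le_mul
    · rw [Real.norm_eq_abs, abs_of_nonneg h2]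
      exact PK_le h0 h1 _
    · exact hM θ hθ
    · exact norm_nonneg _
    · exact div_nonneg (by nlinarith) (by positivity)
  · exact integrable_const _
  · filter_upwards with θ
    exact ((PK_cont h0 h1).comp (continuous_const.sub continuous_id)).mul continuous_const

lemma G_bound {ρ : ℝ} (h0 : 0 ≤ ρ) (h1 : ρ < 1) (g : ℝ → ℝ) (hg : Continuous g)
    {M : ℝ} (hM : ∀ θ ∈ Icc (0:ℝ) (2 * Real.pi), |g θ| ≤ M) (φ : ℝ) :
    ‖∫ θ in Icc (0:ℝ) (2 * Real.pi), PK ρ (θ - φ) * g θ‖ ≤ 2 * Real.pi * M := by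
  have h1' : ‖∫ θ in Icc (0:ℝ) (2 * Real.pi), PK ρ (θ - φ) * g θ‖
      ≤ ∫ θ in Icc (0:ℝ) (2 * Real.pi), PK ρ (θ - φ) * M := by
    refine (MeasureTheory.norm_integral_le_integral_norm _).trans ?_
    apply MeasureTheory.setIntegral_mono_on
    · exact (((PK_cont h0 h1).comp
        (continuous_id.sub continuous_const)).mul hg).norm.integrableOn_Icc
    · exact (((PK_cont h0 h1).comp
        (continuous_id.sub continuous_const)).mul continuous_const).integrableOn_Icc
    · exact measurableSet_Icc
    · intro θ hθ
      rw [norm_mul, Real.norm_eq_abs, abs_of_nonneg (PK_nonneg h0 h1 _)]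
      exact mul_le_mul_of_nonneg_left (hM θ hθ) (PK_nonneg h0 h1 _)
  refine h1'.trans ?_
  rw [MeasureTheory.integral_mul_const, PK_setIntegral_shift h0 h1]

lemma main_ae_zero (f : ℝ → ℝ)
    (hint : IntervalIntegrable f volume 0 (2 * Real.pi))
    (hzero : ∀ ρ : ℝ, 0 ≤ ρ → ρ < 1 → ∀ θ : ℝ,
      (∫ φ in (0:ℝ)..(2 * Real.pi),
        f φ * (1 - ρ ^ 2) / (1 - 2 * ρ * Real.cos (θ - φ) + ρ ^ 2)) = 0) :
    ∀ᵐ θ : ℝ ∂(volume.restrict (Icc (0 : ℝ) (2 * Real.pi))), f θ = 0 := by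
  have hπ : (0:ℝ) < 2 * Real.pi := by positivity
  have hf : IntegrableOn f (Icc (0:ℝ) (2 * Real.pi)) :=
    (intervalIntegrable_iff_integrableOn_Icc_of_le hπ.le).1 hint
  have key : ∀ g : ℝ → ℝ, Continuous g →
      ∫ x, g x * f x ∂(volume.restrict (Icc (0:ℝ) (2 * Real.pi))) = 0 := by
    intro g hg
    obtain ⟨M, hM⟩ : ∃ M, ∀ θ ∈ Icc (0:ℝ) (2 * Real.pi), |g θ| ≤ M :=
      ⟨sSup (abs ∘ g '' Icc (0:ℝ) (2 * Real.pi)),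
        fun θ hθ => le_csSup ((isCompact_Icc.image (hg.abs)).bddAbove)
        (mem_image_of_mem _ hθ)⟩
    have hconv : Tendsto (fun n => ∫ φ in Icc (0:ℝ) (2 * Real.pi),
        f φ * ∫ θ in Icc (0:ℝ) (2 * Real.pi), PK (rseq n) (θ - φ) * g θ) atTop
        (𝓝 (∫ φ in Icc (0:ℝ) (2 * Real.pi), f φ * (2 * Real.pi * g φ))) := by
      apply MeasureTheory.tendsto_integral_of_dominated_convergence
        (bound := fun φ => |f φ| * (2 * Real.pi * M))
      · intro n
        exact hf.aestronglyMeasurable.mul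
          (G_cont (rseq_nonneg n) (rseq_lt_one n) g hg hM).aestronglyMeasurable
      · exact (hf.norm.mul_const _)
      · intro n
        filter_upwards with φ
        rw [norm_mul]
        exact mul_le_mul_of_nonneg_left
          (G_bound (rseq_nonneg n) (rseq_lt_one n) g hg hM φ) (norm_nonneg _)
      · have hIoo : ∀ᵐ φ ∂(volume.restrict (Icc (0:ℝ) (2 * Real.pi))),
            φ ∈ Ioo (0:ℝ) (2 * Real.pi) := by
          refine mem_ae_iff.mpr ?_
          show (volume.restrict (Icc (0:ℝ) (2 * Real.pi))) (Ioo (0:ℝ) (2 * Real.pi))ᶜ = 0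
          rw [Measure.restrict_apply (measurableSet_Ioo.compl)]
          apply measure_mono_null (t := ({0, 2 * Real.pi} : Set ℝ))
          · intro x hx
            simp only [mem_inter_iff, mem_compl_iff, mem_Ioo, not_and_or, not_lt,
              mem_Icc] at hx
            simp only [mem_insert_iff, mem_singleton_iff]
            rcases hx.1 with h | h
            · exact Or.inl (le_antisymm h hx.2.1)
            · exact Or.inr (le_antisymm hx.2.2 h)
          · exact Set.Finite.measure_zero (by simp) _
        filter_upwards [hIoo] with φ hφ
        exact (peak_conv g hg φ hφ).const_mul (f φ)
    have hzero' : ∀ n, (∫ φ in Icc (0:ℝ) (2 * Real.pi),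
        f φ * ∫ θ in Icc (0:ℝ) (2 * Real.pi), PK (rseq n) (θ - φ) * g θ) = 0 := fun n =>
      fubini_zero f hf hzero g hg (rseq_nonneg n) (rseq_lt_one n)
    have hlim0 : (∫ φ in Icc (0:ℝ) (2 * Real.pi), f φ * (2 * Real.pi * g φ)) = 0 :=
      tendsto_nhds_unique hconv (by simp only [hzero']; exact tendsto_const_nhds)
    have heq : ∀ φ, f φ * (2 * Real.pi * g φ) = 2 * Real.pi * (g φ * f φ) := fun φ => by ring
    simp only [heq] at hlim0
    rw [MeasureTheory.integral_const_mul] at hlim0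
    exact (mul_eq_zero.1 hlim0).resolve_left hπ.ne'
  have := ae_eq_zero_of_integral_contDiff_smul_eq_zero
    (μ := volume.restrict (Icc (0:ℝ) (2 * Real.pi)))
    (hf.integrable.locallyIntegrable) ?_
  · exact this
  · intro g hgsm _
    simpa only [smul_eq_mul] using key g hgsm.continuous

/-- If the Poisson integral of a 2π-periodic integrable real function `f`
vanishes identically on the open unit disk, then `f = 0` almost everywhere on `[0, 2π]`.
Consequently, the Poisson-integral solution of the Dirichlet problem on the unit disk is
unique: two integrable boundary data whose Poisson integrals coincide on the open unit disk
are equal almost everywhere. -/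
theorem poisson_integral_vanishes_imp_ae_zero_and_uniqueness
    (f : ℝ → ℝ)
    (hper : Function.Periodic f (2 * Real.pi))
    (hint : IntervalIntegrable f volume 0 (2 * Real.pi))
    (hzero : ∀ ρ : ℝ, 0 ≤ ρ → ρ < 1 → ∀ θ : ℝ,
      (∫ φ in (0:ℝ)..(2 * Real.pi),
        f φ * (1 - ρ ^ 2) / (1 - 2 * ρ * Real.cos (θ - φ) + ρ ^ 2)) = 0) :
    (∀ᵐ θ : ℝ ∂(volume.restrict (Icc (0 : ℝ) (2 * Real.pi))), f θ = 0) ∧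
    (∀ g h : ℝ → ℝ,
      Function.Periodic g (2 * Real.pi) → Function.Periodic h (2 * Real.pi) →
      IntervalIntegrable g volume 0 (2 * Real.pi) →
      IntervalIntegrable h volume 0 (2 * Real.pi) →
      (∀ ρ : ℝ, 0 ≤ ρ → ρ < 1 → ∀ θ : ℝ,
        (1 / (2 * Real.pi)) * (∫ φ in (0:ℝ)..(2 * Real.pi),
            g φ * (1 - ρ ^ 2) / (1 - 2 * ρ * Real.cos (θ - φ) + ρ ^ 2)) =
        (1 / (2 * Real.pi)) * ∫ φ in (0:ℝ)..(2 * Real.pi),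
            h φ * (1 - ρ ^ 2) / (1 - 2 * ρ * Real.cos (θ - φ) + ρ ^ 2)) →
      ∀ᵐ θ : ℝ ∂(volume.restrict (Icc (0 : ℝ) (2 * Real.pi))), g θ = h θ) := by
  have hπ : (0:ℝ) < 2 * Real.pi := by positivity
  constructor
  · exact main_ae_zero f hint hzero
  · intro g h hgp hhp hgi hhi heq
    have hzero' : ∀ ρ : ℝ, 0 ≤ ρ → ρ < 1 → ∀ θ : ℝ,
        (∫ φ in (0:ℝ)..(2 * Real.pi),
          (g - h) φ * (1 - ρ ^ 2) / (1 - 2 * ρ * Real.cos (θ - φ) + ρ ^ 2)) = 0 := by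
      intro ρ h0 h1 θ
      have hker : ContinuousOn (fun φ => (1 - ρ ^ 2) / (1 - 2 * ρ * Real.cos (θ - φ) + ρ ^ 2))
          (uIcc (0:ℝ) (2 * Real.pi)) := by
        apply Continuous.continuousOn
        exact continuous_const.div (by continuity) (fun φ => (PK_denom_pos h0 h1 (θ - φ)).ne')
      have hgint : IntervalIntegrable
          (fun φ => g φ * ((1 - ρ ^ 2) / (1 - 2 * ρ * Real.cos (θ - φ) + ρ ^ 2)))
          volume 0 (2 * Real.pi) := hgi.mul_continuousOn hker
      have hhint : IntervalIntegrable
          (fun φ => h φ * ((1 - ρ ^ 2) / (1 - 2 * ρ * Real.cos (θ - φ) + ρ ^ 2)))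
          volume 0 (2 * Real.pi) := hhi.mul_continuousOn hker
      have hAB : (∫ φ in (0:ℝ)..(2 * Real.pi),
            g φ * (1 - ρ ^ 2) / (1 - 2 * ρ * Real.cos (θ - φ) + ρ ^ 2)) =
          ∫ φ in (0:ℝ)..(2 * Real.pi),
            h φ * (1 - ρ ^ 2) / (1 - 2 * ρ * Real.cos (θ - φ) + ρ ^ 2) :=
        mul_left_cancel₀ (by positivity : (1 / (2 * Real.pi) : ℝ) ≠ 0) (heq ρ h0 h1 θ)
      have hsplit : ∀ φ, (g - h) φ * (1 - ρ ^ 2) / (1 - 2 * ρ * Real.cos (θ - φ) + ρ ^ 2)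
          = g φ * ((1 - ρ ^ 2) / (1 - 2 * ρ * Real.cos (θ - φ) + ρ ^ 2))
            - h φ * ((1 - ρ ^ 2) / (1 - 2 * ρ * Real.cos (θ - φ) + ρ ^ 2)) := by
        intro φ; simp only [Pi.sub_apply]; ring
      simp only [hsplit]
      rw [intervalIntegral.integral_sub hgint hhint, sub_eq_zero]
      have e1 : ∀ φ, g φ * ((1 - ρ ^ 2) / (1 - 2 * ρ * Real.cos (θ - φ) + ρ ^ 2))
          = g φ * (1 - ρ ^ 2) / (1 - 2 * ρ * Real.cos (θ - φ) + ρ ^ 2) := fun φ => by ring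
      have e2 : ∀ φ, h φ * ((1 - ρ ^ 2) / (1 - 2 * ρ * Real.cos (θ - φ) + ρ ^ 2))
          = h φ * (1 - ρ ^ 2) / (1 - 2 * ρ * Real.cos (θ - φ) + ρ ^ 2) := fun φ => by ring
      simp only [e1, e2]
      exact hAB
    have := main_ae_zero (g - h) (hgi.sub hhi) hzero'
    filter_upwards [this] with θ hθ
    simpa [sub_eq_zero] using hθ
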